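/- Let (L,[-,-],{-,-,-},R) be a modified Rota-Baxter Lie-Yamaguti algebra and let L_R = (L, [-,-]_R, {-,-,-}_R) be the Lie-Yamaguti algebra with [x,y]_R := [Rx,y] + [x,Ry] and {x,y,z}_R := {x,Ry,Rz} + {Rx,y,Rz} + {Rx,Ry,z} + {x,y,z}. Then R is a modified Rota-Baxter operator on L_R, i.e. (L_R, R) is a modified Rota-Baxter Lie-Yamaguti algebra. -/
import Mathlib


/-- A Lie-Yamaguti algebra: bilinear bracket `br`, trilinear bracket `tr`,
satisfying (LY1)-(LY6). -/
structure LieYamaguti (K : Type*) (L : Type*) [Field K] [AddCommGroup L] [Module K L] where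
  br : L →ₗ[K] L →ₗ[K] L
  tr : L →ₗ[K] L →ₗ[K] L →ₗ[K] L
  ly1 : ∀ x y, br x y = - br y x
  ly2 : ∀ x y z, tr x y z = - tr y x z
  ly3 : ∀ x y z,
    br (br x y) z + br (br y z) x + br (br z x) y + tr x y z + tr y z x + tr z x y = 0
  ly4 : ∀ x y z a, tr (br x y) z a + tr (br z x) y a + tr (br y z) x a = 0
  ly5 : ∀ a b x y, tr a b (br x y) = br (tr a b x) y + br x (tr a b y)
  ly6 : ∀ a b x y z,
    tr a b (tr x y z) = tr (tr a b x) y z + tr x (tr a b y) z + tr x y (tr a b z)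

/-- A modified Rota-Baxter operator on a Lie-Yamaguti algebra. -/
def IsMRB {K L : Type*} [Field K] [AddCommGroup L] [Module K L]
    (A : LieYamaguti K L) (R : L →ₗ[K] L) : Prop :=
  (∀ x y, A.br (R x) (R y) = R (A.br (R x) y + A.br x (R y)) - A.br x y) ∧
  (∀ x y z, A.tr (R x) (R y) (R z) =
      R (A.tr x (R y) (R z) + A.tr (R x) y (R z) + A.tr (R x) (R y) z + A.tr x y z)
      - A.tr (R x) y z - A.tr x (R y) z - A.tr x y (R z))

/-- `R` is again a modified Rota-Baxter operator for the descendent brackets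
`[x,y]_R := [Rx,y] + [x,Ry]` and
`{x,y,z}_R := {x,Ry,Rz} + {Rx,y,Rz} + {Rx,Ry,z} + {x,y,z}`. -/
theorem isMRB_descendent (K L : Type*) [Field K] [CharZero K]
    [AddCommGroup L] [Module K L]
    (A : LieYamaguti K L) (R : L →ₗ[K] L) (hR : IsMRB A R) :
    ∀ (brR : L → L → L) (trR : L → L → L → L),
      (∀ x y, brR x y = A.br (R x) y + A.br x (R y)) →
      (∀ x y z, trR x y z
          = A.tr x (R y) (R z) + A.tr (R x) y (R z) + A.tr (R x) (R y) z + A.tr x y z) →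
      (∀ x y, brR (R x) (R y) = R (brR (R x) y + brR x (R y)) - brR x y) ∧
      (∀ x y z, trR (R x) (R y) (R z)
          = R (trR x (R y) (R z) + trR (R x) y (R z) + trR (R x) (R y) z + trR x y z)
            - trR (R x) y z - trR x (R y) z - trR x y (R z)) := by
  intro brR trR hbr htr
  constructor
  · intro x y
    simp only [hbr]
    rw [hR.1 (R x) y, hR.1 x (R y)]
    simp only [map_add]
    abel
  · intro x y z
    simp only [htr]
    rw [hR.2 x (R y) (R z), hR.2 (R x) y (R z), hR.2 (R x) (R y) z, hR.2 x y z]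
    simp only [map_add]
    abel
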